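/- Let A be a real symmetric n×n matrix. The absolute value equation A x − |x| = b has exactly one solution x ∈ ℝ^n for every b ∈ ℝ^n if and only if the symmetric matrices A − I and A + I have the same signature, i.e. the same number of positive eigenvalues, the same number of negative eigenvalues, and the same number of zero eigenvalues (counted with multiplicity). -/

import Mathlib

open Polynomial

/-- The signature of a real (symmetric) matrix: the numbers of positive,
negative and zero eigenvalues, counted with multiplicity (as roots of the
characteristic polynomial; for a symmetric real matrix the characteristic
polynomial splits over `ℝ` and its roots with multiplicity are exactly the
eigenvalues with multiplicity). -/
noncomputable def signature {n : ℕ} (M : Matrix (Fin n) (Fin n) ℝ) : ℕ × ℕ × ℕ :=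
  ((M.charpoly.roots.filter fun μ => 0 < μ).card,
   (M.charpoly.roots.filter fun μ => μ < 0).card,
   (M.charpoly.roots.filter fun μ => μ = 0).card)

section Aux

open Matrix


lemma charpoly_add_smul_one {n : ℕ} (M : Matrix (Fin n) (Fin n) ℝ) (c : ℝ) :
    (M + c • 1).charpoly = M.charpoly.comp (X - C c) := by
  have hdet := RingHom.map_det (eval₂RingHom Polynomial.C (X - C c)) (charmatrix M)
  have hm : (M + c • 1).charmatrix = (eval₂RingHom Polynomial.C (X - C c)).mapMatrix (charmatrix M) := by
    ext i j
    by_cases h : i = j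
    · subst h
      simp only [charmatrix_apply_eq, RingHom.mapMatrix_apply, Matrix.map_apply,
        coe_eval₂RingHom, eval₂_sub, eval₂_X, eval₂_C, Matrix.add_apply, Matrix.smul_apply,
        Matrix.one_apply_eq, smul_eq_mul, mul_one, map_add]
      ring
    · simp [charmatrix_apply_ne _ _ _ h, Matrix.one_apply_ne h, Matrix.add_apply,
        Matrix.smul_apply]
  rw [Matrix.charpoly, Matrix.charpoly, hm, ← hdet]
  simp [Polynomial.comp]


lemma charpoly_conj_unitary {n : ℕ} (V D : Matrix (Fin n) (Fin n) ℝ)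
    (hV : V ∈ Matrix.unitaryGroup (Fin n) ℝ) :
    (V * D * star V).charpoly = D.charpoly := by
  have h1 : V * star V = 1 := (Matrix.mem_unitaryGroup_iff).mp hV
  have h2 : star V * V = 1 := (Matrix.mem_unitaryGroup_iff').mp hV
  set f := (Polynomial.C : ℝ →+* ℝ[X])
  have hone : (1 : Matrix (Fin n) (Fin n) ℝ).map f = 1 :=
    Matrix.map_one f (map_zero f) (map_one f)
  have hm : (V * D * star V).charmatrix = V.map f * D.charmatrix * (star V).map f := by
    rw [charmatrix, charmatrix, Matrix.mul_sub, Matrix.sub_mul]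
    congr 1
    · have hsc : (Matrix.scalar (Fin n)) (X : ℝ[X]) = (X : ℝ[X]) • 1 := by
        simp [Matrix.smul_one_eq_diagonal, Matrix.scalar]
      rw [hsc, Matrix.mul_smul, Matrix.mul_one, Matrix.smul_mul, ← Matrix.map_mul, h1, hone]
    · rw [RingHom.mapMatrix_apply, RingHom.mapMatrix_apply, ← Matrix.map_mul, ← Matrix.map_mul]
  rw [Matrix.charpoly, Matrix.charpoly, hm, Matrix.det_mul, Matrix.det_mul]
  rw [mul_comm, ← mul_assoc, ← Matrix.det_mul, ← Matrix.map_mul, h2, hone, Matrix.det_one, one_mul]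

lemma charpoly_eq_prod {n : ℕ} {A : Matrix (Fin n) (Fin n) ℝ} (hA : A.IsHermitian) :
    A.charpoly = ∏ i, (X - C (hA.eigenvalues i)) := by
  have hd : (Matrix.diagonal (RCLike.ofReal ∘ hA.eigenvalues) : Matrix (Fin n) (Fin n) ℝ)
      = Matrix.diagonal hA.eigenvalues := by
    congr 1
  conv_lhs => rw [hA.spectral_theorem, Unitary.conjStarAlgAut_apply]
  rw [charpoly_conj_unitary _ _ (hA.eigenvectorUnitary).2, hd,
    charpoly_of_upperTriangular _ (Matrix.blockTriangular_diagonal _)]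
  simp [Matrix.diagonal_apply_eq]

lemma roots_charpoly_shift {n : ℕ} {A : Matrix (Fin n) (Fin n) ℝ} (hA : A.IsHermitian) (c : ℝ) :
    (A + c • 1).charpoly.roots
      = Finset.univ.val.map (fun i => hA.eigenvalues i + c) := by
  rw [charpoly_add_smul_one, charpoly_eq_prod hA, Polynomial.prod_comp]
  have h1 : ∀ i : Fin n, (X - C (hA.eigenvalues i)).comp (X - C c)
      = X - C (hA.eigenvalues i + c) := by
    intro i
    simp [sub_comp, map_add]
    ring
  simp only [h1]
  have h2 : ∏ i : Fin n, (X - C (hA.eigenvalues i + c))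
      = (Multiset.map (fun a : ℝ => X - C a)
          (Finset.univ.val.map (fun i => hA.eigenvalues i + c))).prod := by
    rw [Multiset.map_map]
    rfl
  rw [h2, roots_multiset_prod_X_sub_C]

lemma sig_iff {n : ℕ} {A : Matrix (Fin n) (Fin n) ℝ} (hA : A.IsHermitian) :
    signature (A - 1) = signature (A + 1) ↔ ∀ i, 1 < |hA.eigenvalues i| := by
  have hm1 : A - 1 = A + (-1 : ℝ) • 1 := by
    rw [neg_one_smul, sub_eq_add_neg]
  have hp1 : A + 1 = A + (1 : ℝ) • 1 := by rw [one_smul]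
  rw [hm1, hp1]
  unfold signature
  rw [roots_charpoly_shift hA (-1), roots_charpoly_shift hA 1]
  simp only [Multiset.filter_map, Multiset.card_map, Prod.mk.injEq, Function.comp_def]
  constructor
  · rintro ⟨h1, h2, _⟩ i
    by_contra hc
    push_neg at hc
    rw [abs_le] at hc
    have hf1 : (Finset.univ.val.filter fun j => 0 < hA.eigenvalues j + (-1))
        = Finset.univ.val.filter fun j => 0 < hA.eigenvalues j + 1 := by
      apply Multiset.eq_of_le_of_card_le
      · exact Multiset.monotone_filter_right _ (fun a ha => by linarith)
      · exact le_of_eq h1.symm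
    have hf2 : (Finset.univ.val.filter fun j => hA.eigenvalues j + 1 < 0)
        = Finset.univ.val.filter fun j => hA.eigenvalues j + (-1) < 0 := by
      apply Multiset.eq_of_le_of_card_le
      · exact Multiset.monotone_filter_right _ (fun a ha => by linarith)
      · exact le_of_eq h2
    rcases eq_or_lt_of_le hc.1 with hmeq | hmlt
    · have hmem : i ∈ Finset.univ.val.filter fun j => hA.eigenvalues j + (-1) < 0 := by
        rw [Multiset.mem_filter]
        exact ⟨Finset.mem_univ_val i, by linarith⟩
      rw [← hf2, Multiset.mem_filter] at hmem
      linarith [hmem.2]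
    · have hmem : i ∈ Finset.univ.val.filter fun j => 0 < hA.eigenvalues j + 1 := by
        rw [Multiset.mem_filter]
        exact ⟨Finset.mem_univ_val i, by linarith⟩
      rw [← hf1, Multiset.mem_filter] at hmem
      linarith [hmem.2]
  · intro h
    have habs : ∀ i, hA.eigenvalues i < -1 ∨ 1 < hA.eigenvalues i := by
      intro i
      rcases (lt_abs.mp (h i)) with h' | h'
      · right; exact h'
      · left; linarith
    refine ⟨?_, ?_, ?_⟩ <;>
    · congr 1
      apply Multiset.filter_congr
      intro i _
      rcases habs i with h' | h' <;> constructor <;> intro <;> first | linarith | (exfalso; linarith)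


lemma eig_gt_one_of_unique {n : ℕ} {A : Matrix (Fin n) (Fin n) ℝ} (hA : A.IsHermitian)
    (h : ∀ b : Fin n → ℝ, ∃! x : Fin n → ℝ, A.mulVec x - (fun i => |x i|) = b) (i : Fin n) :
    1 < |hA.eigenvalues i| := by
  by_contra hc
  push_neg at hc
  rw [abs_le] at hc
  set l := hA.eigenvalues i with hl
  set v : Fin n → ℝ := ⇑(hA.eigenvectorBasis i) with hvdef
  have hv : A *ᵥ v = l • v := hA.mulVec_eigenvectorBasis i
  have hvne : v ≠ 0 := by
    have := hA.eigenvectorBasis.orthonormal.ne_zero i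
    intro h0
    apply this
    ext j
    exact congrFun h0 j
  set x : Fin n → ℝ := fun j => (v j + l * |v j|) / 2 with hx
  set y : Fin n → ℝ := fun j => (l * |v j| - v j) / 2 with hy
  have key1 : ∀ j, x j - y j = v j := by
    intro j; simp only [hx, hy]; ring
  have key2 : ∀ j, |x j| - |y j| = l * v j := by
    intro j
    rcases le_or_gt 0 (v j) with hj | hj
    · have hxj : 0 ≤ x j := by
        simp only [hx, abs_of_nonneg hj]; nlinarith [hc.1, hc.2]
      have hyj : y j ≤ 0 := by
        simp only [hy, abs_of_nonneg hj]; nlinarith [hc.1, hc.2]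
      rw [abs_of_nonneg hxj, abs_of_nonpos hyj]
      simp only [hx, hy, abs_of_nonneg hj]; ring
    · have hxj : x j ≤ 0 := by
        simp only [hx, abs_of_neg hj]; nlinarith [hc.1, hc.2]
      have hyj : 0 ≤ y j := by
        simp only [hy, abs_of_neg hj]; nlinarith [hc.1, hc.2]
      rw [abs_of_nonpos hxj, abs_of_nonneg hyj]
      simp only [hx, hy, abs_of_neg hj]; ring
  have hxyv : x - y = v := funext key1
  have hsol : A.mulVec x - (fun j => |x j|) = A.mulVec y - (fun j => |y j|) := by
    have hAv : A *ᵥ x - A *ᵥ y = l • v := by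
      rw [← Matrix.mulVec_sub, hxyv, hv]
    funext j
    have h1 := congrFun hAv j
    simp only [Pi.sub_apply, Pi.smul_apply, smul_eq_mul] at h1 ⊢
    have h2 := key2 j
    linarith
  obtain ⟨w, hw, huniq⟩ := h (A.mulVec x - fun j => |x j|)
  have hxw : x = w := huniq x rfl
  have hyw : y = w := huniq y hsol.symm
  obtain ⟨j, hj⟩ := Function.ne_iff.mp hvne
  apply hj
  rw [← key1 j, hxw, hyw, sub_self]
  rfl


lemma exists_unique_of_eigs {n : ℕ} {A : Matrix (Fin n) (Fin n) ℝ} (hA : A.IsHermitian)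
    (h : ∀ i, 1 < |hA.eigenvalues i|) (b : Fin n → ℝ) :
    ∃! x : Fin n → ℝ, A.mulVec x - (fun i => |x i|) = b := by
  classical
  rcases Nat.eq_zero_or_pos n with hn | hn
  · subst hn
    exact ⟨0, funext fun j => j.elim0, fun y _ => funext fun j => j.elim0⟩
  have : NeZero n := ⟨by omega⟩
  set e := hA.eigenvalues with he
  -- the minimum of |e i|
  have hne : (Finset.univ : Finset (Fin n)).Nonempty := Finset.univ_nonempty
  set m : ℝ := Finset.univ.inf' hne (fun i => |e i|) with hm
  have hm1 : 1 < m := by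
    rw [hm, Finset.lt_inf'_iff]
    exact fun i _ => h i
  have hm0 : 0 < m := by linarith
  have hmle : ∀ i, m ≤ |e i| := fun i => Finset.inf'_le _ (Finset.mem_univ i)
  -- squared norm on EuclideanSpace
  have hsq : ∀ w : EuclideanSpace ℝ (Fin n), ‖w‖ ^ 2 = ∑ j, (w j) ^ 2 := by
    intro w
    rw [EuclideanSpace.norm_eq, Real.sq_sqrt (by positivity)]
    simp [Real.norm_eq_abs, sq_abs]
  -- symmetry of A as transpose
  have hAT : Aᵀ = A := by
    rw [← Matrix.conjTranspose_eq_transpose_of_trivial]; exact hA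
  set B := hA.eigenvectorBasis with hB
  -- repr of A *ᵥ z
  have hrepr : ∀ (z : EuclideanSpace ℝ (Fin n)) (j : Fin n),
      B.repr (WithLp.toLp 2 <| A *ᵥ z) j = e j * B.repr z j := by
    intro z j
    rw [B.repr_apply_apply, B.repr_apply_apply]
    have h1 : (inner ℝ (B j) (WithLp.toLp 2 <| A *ᵥ z) : ℝ)
        = (⇑(B j)) ⬝ᵥ (A *ᵥ z) := by
      simp [PiLp.inner_apply, dotProduct, RCLike.inner_apply, mul_comm]
    have h2 : (inner ℝ (B j) z : ℝ) = (⇑(B j)) ⬝ᵥ (⇑z) := by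
      simp [PiLp.inner_apply, dotProduct, RCLike.inner_apply, mul_comm]
    rw [h1, h2, Matrix.dotProduct_mulVec, ← Matrix.mulVec_transpose, hAT,
      hA.mulVec_eigenvectorBasis, smul_dotProduct]
    rfl
  -- key coercive estimate
  have key : ∀ z : EuclideanSpace ℝ (Fin n),
      m * ‖z‖ ≤ ‖(WithLp.toLp 2 <| A *ᵥ z)‖ := by
    intro z
    have hle : (m * ‖z‖) ^ 2 ≤ ‖(WithLp.toLp 2 <| A *ᵥ z)‖ ^ 2 := by
      have hz : ‖z‖ = ‖B.repr z‖ := (B.repr.norm_map z).symm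
      have hAz : ‖(WithLp.toLp 2 <| A *ᵥ z)‖
          = ‖B.repr (WithLp.toLp 2 <| A *ᵥ z)‖ :=
        (B.repr.norm_map _).symm
      rw [mul_pow, hz, hAz, hsq, hsq]
      simp only [hrepr]
      rw [Finset.mul_sum]
      apply Finset.sum_le_sum
      intro j _
      have : m ^ 2 ≤ (e j) ^ 2 := by
        have := hmle j
        nlinarith [abs_nonneg (e j), sq_abs (e j)]
      nlinarith [sq_nonneg (B.repr z j), sq_nonneg (e j * B.repr z j)]
    have h0 : 0 ≤ m * ‖z‖ := by positivity
    nlinarith [norm_nonneg (WithLp.toLp 2 <| A *ᵥ z)]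
  -- invertibility
  have hdet : IsUnit A.det := by
    rw [isUnit_iff_ne_zero, hA.det_eq_prod_eigenvalues]
    apply Finset.prod_ne_zero_iff.mpr
    intro i _
    have := h i
    simp only [RCLike.ofReal_real_eq_id, id_eq]
    intro h0
    rw [← he] at *
    rw [h0] at this
    simp at this
    linarith
  have hInv1 : ∀ w : Fin n → ℝ, A *ᵥ (A⁻¹ *ᵥ w) = w := by
    intro w
    rw [Matrix.mulVec_mulVec, Matrix.mul_nonsing_inv A hdet, Matrix.one_mulVec]
  have hInv2 : ∀ w : Fin n → ℝ, A⁻¹ *ᵥ (A *ᵥ w) = w := by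
    intro w
    rw [Matrix.mulVec_mulVec, Matrix.nonsing_inv_mul A hdet, Matrix.one_mulVec]
  -- inverse bound
  have keyInv : ∀ w : EuclideanSpace ℝ (Fin n),
      ‖(WithLp.toLp 2 <| A⁻¹ *ᵥ w)‖ ≤ m⁻¹ * ‖w‖ := by
    intro w
    have hk := key (WithLp.toLp 2 <| A⁻¹ *ᵥ w)
    rw [show (A *ᵥ (A⁻¹ *ᵥ w)) = w from hInv1 w] at hk
    rw [← div_eq_inv_mul]
    exact (le_div_iff₀' hm0).mpr hk
  -- the contraction
  set g : EuclideanSpace ℝ (Fin n) → EuclideanSpace ℝ (Fin n) :=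
    fun z => (WithLp.toLp 2 <| A⁻¹ *ᵥ (b + fun j => |z j|)) with hg
  have habs : ∀ x y : EuclideanSpace ℝ (Fin n),
      ‖(WithLp.toLp 2 <| (fun j => |x j| - |y j|))‖ ≤ ‖x - y‖ := by
    intro x y
    rw [EuclideanSpace.norm_eq, EuclideanSpace.norm_eq]
    apply Real.sqrt_le_sqrt
    apply Finset.sum_le_sum
    intro j _
    have h1 : |(|x j| - |y j|)| ≤ |x j - y j| := abs_abs_sub_abs_le_abs_sub _ _
    have h2 : (x - y) j = x j - y j := rfl
    rw [h2]
    simp only [Real.norm_eq_abs]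
    nlinarith [abs_nonneg (|x j| - |y j|), abs_nonneg (x j - y j), sq_abs (|x j| - |y j|), sq_abs (x j - y j)]
  have hlip : ∀ x y : EuclideanSpace ℝ (Fin n), dist (g x) (g y) ≤ m⁻¹ * dist x y := by
    intro x y
    rw [dist_eq_norm, dist_eq_norm]
    have hgd : g x - g y = (WithLp.toLp 2 <| A⁻¹ *ᵥ (fun j => |x j| - |y j|)) := by
      show (WithLp.toLp 2 <| A⁻¹ *ᵥ (b + fun j => |x j|)) - _ = _
      have : (b + fun j => |x j|) - (b + fun j => |y j|) = (fun j => |x j| - |y j|) := by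
        funext j; simp [Pi.add_apply, Pi.sub_apply]
      calc (WithLp.toLp 2 <| A⁻¹ *ᵥ (b + fun j => |x j|))
            - (WithLp.toLp 2 <| A⁻¹ *ᵥ (b + fun j => |y j|))
          = (WithLp.toLp 2 <| A⁻¹ *ᵥ ((b + fun j => |x j|) - (b + fun j => |y j|))) := by
            show _ = (WithLp.toLp 2 <| _)
            rw [Matrix.mulVec_sub, ← WithLp.toLp_sub]
        _ = _ := by rw [this]
    rw [hgd]
    calc ‖(WithLp.toLp 2 <| A⁻¹ *ᵥ (fun j => |x j| - |y j|))‖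
        ≤ m⁻¹ * ‖(WithLp.toLp 2 <| (fun j => |x j| - |y j|))‖ := keyInv (WithLp.toLp 2 (fun j => |x j| - |y j|))
      _ ≤ m⁻¹ * ‖x - y‖ := by
          apply mul_le_mul_of_nonneg_left (habs x y) (by positivity)
  -- contraction constant
  set k : NNReal := ⟨m⁻¹, by positivity⟩ with hk
  have hklt : k < 1 := by
    rw [hk]; apply NNReal.coe_lt_coe.mp
    show m⁻¹ < 1
    rw [inv_lt_one_iff₀]
    right; exact hm1
  have hcon : ContractingWith k g := by
    constructor
    · exact hklt
    · apply LipschitzWith.of_dist_le_mul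
      intro x y
      exact hlip x y
  -- fixed points are solutions
  have hfixiff : ∀ x : EuclideanSpace ℝ (Fin n),
      (A.mulVec x - (fun i => |x i|) = b) ↔ Function.IsFixedPt g x := by
    intro x
    constructor
    · intro hx
      have : A *ᵥ x = b + fun j => |x j| := by
        funext j
        have := congrFun hx j
        simp only [Pi.sub_apply, Pi.add_apply] at this ⊢
        linarith
      show g x = x
      rw [hg]
      simp only
      rw [← this, hInv2]
    · intro hx
      have hgx : (WithLp.toLp 2 <| A⁻¹ *ᵥ (b + fun j => |x j|)) = x := hx
      have : A *ᵥ x = b + fun j => |x j| := by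
        conv_lhs => rw [← hgx]
        exact hInv1 _
      funext j
      have := congrFun this j
      simp only [Pi.add_apply] at this
      simp only [Pi.sub_apply]
      linarith
  obtain ⟨x₀, hx₀⟩ : ∃ x : EuclideanSpace ℝ (Fin n), Function.IsFixedPt g x :=
    ⟨ContractingWith.fixedPoint g hcon, ContractingWith.fixedPoint_isFixedPt hcon⟩
  refine ⟨x₀, (hfixiff x₀).mpr hx₀, fun y hy => ?_⟩
  exact congrArg WithLp.ofLp (ContractingWith.fixedPoint_unique' hcon ((hfixiff (WithLp.toLp 2 y)).mp hy) hx₀)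

end Aux

/-- For a symmetric real matrix `A`, the AVE `A x − |x| = b` has a
unique solution for every `b` iff `A − I` and `A + I` have the same signature. -/
theorem ave_unique_iff_same_signature {n : ℕ} (A : Matrix (Fin n) (Fin n) ℝ)
    (hA : A.IsSymm) :
    (∀ b : Fin n → ℝ, ∃! x : Fin n → ℝ, A.mulVec x - (fun i => |x i|) = b) ↔
      signature (A - 1) = signature (A + 1) := by
  have hA' : A.IsHermitian := by
    rwa [Matrix.IsHermitian, Matrix.conjTranspose_eq_transpose_of_trivial]
  rw [sig_iff hA']
  constructor
  · exact fun h i => eig_gt_one_of_unique hA' h i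
  · exact fun h b => exists_unique_of_eigs hA' h b
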